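/- Let n ≥ 1 and let D ⊂ ℤ^n be a finite set, viewed as a finite set of points of ℚ^n. Then the vanishing ideal in ℚ[X_1,…,X_n] of D equals the ideal generated by the polynomials ∏_{λ∈D} (Σ_{a=1}^n h_a X_a − ⟨h,λ⟩) as h ranges over ℤ^n. -/

import Mathlib

/-!
Auxiliary lemmas for Statement 8.
-/

open Polynomial in
theorem auxVanish {Q : Type*} [CommRing Q] [Algebra ℚ Q] :
    ∀ (N : ℕ) (p : Polynomial Q), p.natDegree ≤ N →
      (∀ t : ℕ, Polynomial.eval ((t : ℕ) : Q) p = 0) → p = 0 := by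
  intro N
  induction N with
  | zero =>
    intro p hdeg h
    have hp := Polynomial.eq_C_of_natDegree_le_zero hdeg
    have h0 := h 0
    rw [hp] at h0 ⊢
    rw [Nat.cast_zero, Polynomial.eval_C] at h0
    rw [h0, map_zero]
  | succ N ih =>
    intro p hdeg h
    have h0 : p.coeff 0 = 0 := by
      have h0' := h 0
      rwa [Nat.cast_zero, ← Polynomial.coeff_zero_eq_eval_zero] at h0'
    have hsplit : p = Polynomial.divX p * Polynomial.X := by
      have hs := Polynomial.divX_mul_X_add p
      rw [h0, map_zero, add_zero] at hs
      exact hs.symm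
    have hqval : ∀ t : ℕ, Polynomial.eval (((t+1 : ℕ)) : Q) p.divX = 0 := by
      intro t
      have ht := h (t+1)
      rw [hsplit, Polynomial.eval_mul, Polynomial.eval_X] at ht
      have hu : IsUnit (((t+1 : ℕ) : Q)) := by
        have he : ((t+1 : ℕ) : Q) = algebraMap ℚ Q ((t+1 : ℕ) : ℚ) := by
          simp
        rw [he]
        exact IsUnit.map _ (isUnit_iff_ne_zero.mpr (by exact_mod_cast Nat.succ_ne_zero t))
      exact (hu.mul_left_eq_zero).mp ht
    have hr : p.divX.comp (Polynomial.X + Polynomial.C 1) = 0 := by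
      apply ih
      · calc (p.divX.comp (Polynomial.X + Polynomial.C 1)).natDegree
            ≤ p.divX.natDegree * (Polynomial.X + Polynomial.C (1:Q)).natDegree :=
              Polynomial.natDegree_comp_le
          _ ≤ p.divX.natDegree * 1 := Nat.mul_le_mul_left _ (by
              refine (Polynomial.natDegree_add_le _ _).trans ?_
              simp [Polynomial.natDegree_X_le])
          _ ≤ N := by
              have hdq : p.divX.natDegree = p.natDegree - 1 :=
                p.natDegree_divX_eq_natDegree_tsub_one
              omega
      · intro t
        rw [Polynomial.eval_comp, Polynomial.eval_add, Polynomial.eval_X, Polynomial.eval_C]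
        have := hqval t
        push_cast at this ⊢
        exact this
    have hq0 : p.divX = 0 := by
      have hc := congrArg (fun r => r.comp (Polynomial.X - Polynomial.C (1:Q))) hr
      simpa [Polynomial.comp_assoc, Polynomial.add_comp, Polynomial.sub_comp,
        Polynomial.X_comp, Polynomial.C_comp, sub_add_cancel] using hc
    rw [hsplit, hq0, zero_mul]


theorem derivMem {R : Type*} [CommRing R] [Algebra ℚ R] (J : Ideal R) (P : Polynomial R)
    (h : ∀ t : ℕ, Polynomial.eval ((t : ℕ) : R) P ∈ J) :
    Polynomial.eval 0 (Polynomial.derivative P) ∈ J := by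
  have hmap : P.map (Ideal.Quotient.mk J) = 0 := by
    apply auxVanish (P.map (Ideal.Quotient.mk J)).natDegree _ le_rfl
    intro t
    have : ((t : ℕ) : R ⧸ J) = Ideal.Quotient.mk J ((t : ℕ) : R) := by
      simp
    rw [this, Polynomial.eval_map, Polynomial.eval₂_at_apply]
    exact (Ideal.Quotient.eq_zero_iff_mem).mpr (h t)
  have : Ideal.Quotient.mk J (Polynomial.eval 0 (Polynomial.derivative P)) = 0 := by
    have h2 : (Polynomial.derivative P).map (Ideal.Quotient.mk J) = 0 := by
      rw [← Polynomial.derivative_map, hmap, map_zero]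
    calc Ideal.Quotient.mk J (Polynomial.eval 0 (Polynomial.derivative P))
        = Polynomial.eval₂ (Ideal.Quotient.mk J) (Ideal.Quotient.mk J 0)
            (Polynomial.derivative P) := (Polynomial.eval₂_at_apply _ _).symm
      _ = Polynomial.eval (Ideal.Quotient.mk J 0)
            ((Polynomial.derivative P).map (Ideal.Quotient.mk J)) :=
          (Polynomial.eval_map _ _).symm
      _ = 0 := by rw [h2]; simp
  exact (Ideal.Quotient.eq_zero_iff_mem).mp this

open MvPolynomial in
theorem memSpanSub {n : ℕ} (x : Fin n → ℚ) (f : MvPolynomial (Fin n) ℚ)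
    (hf : MvPolynomial.eval x f = 0) :
    f ∈ Ideal.span (Set.range fun a : Fin n => (X a - C (x a) : MvPolynomial (Fin n) ℚ)) := by
  have key : ∀ f : MvPolynomial (Fin n) ℚ,
      f - C (MvPolynomial.eval x f) ∈
        Ideal.span (Set.range fun a : Fin n => (X a - C (x a) : MvPolynomial (Fin n) ℚ)) := by
    intro f
    induction f using MvPolynomial.induction_on with
    | C a => simp
    | add p q hp hq =>
      have : p + q - C (MvPolynomial.eval x (p + q)) =
          (p - C (MvPolynomial.eval x p)) + (q - C (MvPolynomial.eval x q)) := by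
        rw [map_add, map_add]; ring
      rw [this]; exact Ideal.add_mem _ hp hq
    | mul_X p a hp =>
      have : p * X a - C (MvPolynomial.eval x (p * X a)) =
          (p - C (MvPolynomial.eval x p)) * C (x a) + p * (X a - C (x a)) := by
        rw [map_mul, eval_X, map_mul]; ring
      rw [this]
      exact Ideal.add_mem _ (Ideal.mul_mem_right _ _ hp)
        (Ideal.mul_mem_left _ _ (Ideal.subset_span ⟨a, rfl⟩))
  have := key f
  rwa [hf, map_zero, sub_zero] at this


theorem sepAux (n : ℕ) (S : Finset (Fin n → ℤ)) :
    (∀ v ∈ S, v ≠ 0) → ∃ h : Fin n → ℤ, ∀ v ∈ S, (∑ a, h a * v a) ≠ 0 := by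
  classical
  induction S using Finset.induction_on with
  | empty => exact fun _ => ⟨0, fun v hv => absurd hv (Finset.notMem_empty v)⟩
  | @insert v S hvS ih =>
    intro h0
    obtain ⟨h, hh⟩ := ih fun w hw => h0 w (Finset.mem_insert_of_mem hw)
    have hv : v ≠ 0 := h0 v (Finset.mem_insert_self v S)
    obtain ⟨a, ha⟩ : ∃ a, v a ≠ 0 := by
      by_contra hc
      push_neg at hc
      exact hv (funext fun b => hc b)
    set B : Set ℤ := ⋃ w ∈ (insert v S : Finset (Fin n → ℤ)),
      {t : ℤ | (∑ b, h b * w b) + t * w a = 0} with hB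
    have hBfin : B.Finite := by
      apply Set.Finite.biUnion (Finset.finite_toSet _)
      intro w hw
      by_cases hwa : w a = 0
      · have hwS : w ∈ S := by
          rcases Finset.mem_insert.mp hw with rfl | hwS
          · exact absurd hwa ha
          · exact hwS
        have : {t : ℤ | (∑ b, h b * w b) + t * w a = 0} = ∅ := by
          ext t
          simp only [Set.mem_setOf_eq, Set.mem_empty_iff_false, iff_false]
          rw [hwa, mul_zero, add_zero]
          exact hh w hwS
        rw [this]; exact Set.finite_empty
      · apply Set.Subsingleton.finite
        intro t1 h1 t2 h2
        simp only [Set.mem_setOf_eq] at h1 h2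
        have : t1 * w a = t2 * w a := by omega
        exact mul_right_cancel₀ hwa this
    obtain ⟨t, ht⟩ := hBfin.infinite_compl.nonempty
    refine ⟨fun b => h b + (if b = a then t else 0), fun w hw => ?_⟩
    have hsum : (∑ b, (h b + (if b = a then t else 0)) * w b)
        = (∑ b, h b * w b) + t * w a := by
      rw [Finset.sum_congr rfl (fun b _ => add_mul (h b) _ (w b)), Finset.sum_add_distrib]
      congr 1
      rw [Finset.sum_congr rfl (fun b _ => ite_mul (b = a) t 0 (w b))]
      simp
    rw [hsum]
    intro hzero
    exact ht (Set.mem_biUnion hw hzero)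

theorem sepExists (n : ℕ) (D : Finset (Fin n → ℤ)) :
    ∃ h : Fin n → ℤ,
      Set.InjOn (fun lam : Fin n → ℤ => ((∑ a, h a * lam a : ℤ) : ℚ)) ↑D := by
  classical
  obtain ⟨h, hh⟩ := sepAux n
    (((D ×ˢ D).filter (fun p => p.1 ≠ p.2)).image (fun p => p.1 - p.2))
    (by
      intro u hu
      simp only [Finset.mem_image, Finset.mem_filter, Finset.mem_product] at hu
      obtain ⟨p, ⟨⟨_, _⟩, hne⟩, rfl⟩ := hu
      intro hzero
      exact hne (sub_eq_zero.mp hzero))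
  refine ⟨h, fun lam hlam mu hmu heq => ?_⟩
  by_contra hne
  have hmem : lam - mu ∈
      ((D ×ˢ D).filter (fun p => p.1 ≠ p.2)).image (fun p => p.1 - p.2) := by
    apply Finset.mem_image.mpr
    exact ⟨(lam, mu), Finset.mem_filter.mpr ⟨Finset.mem_product.mpr ⟨hlam, hmu⟩, hne⟩, rfl⟩
  apply hh _ hmem
  have : (∑ a, h a * lam a) = (∑ a, h a * mu a) := by
    simp only at heq
    exact_mod_cast heq
  have : (∑ a, h a * (lam - mu) a) = 0 := by
    simp only [Pi.sub_apply, mul_sub, Finset.sum_sub_distrib]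
    omega
  exact this


theorem derivative_finset_prod {R : Type*} [CommSemiring R] {ι : Type*} [DecidableEq ι]
    (s : Finset ι) (f : ι → Polynomial R) :
    Polynomial.derivative (∏ i ∈ s, f i)
      = ∑ i ∈ s, (∏ j ∈ s.erase i, f j) * Polynomial.derivative (f i) := by
  induction s using Finset.induction_on with
  | empty => simp
  | @insert i s hi ih =>
    rw [Finset.prod_insert hi, Polynomial.derivative_mul, ih, Finset.sum_insert hi,
      Finset.erase_insert hi, Finset.mul_sum]
    rw [mul_comm (Polynomial.derivative (f i)) (∏ j ∈ s, f j)]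
    congr 1
    apply Finset.sum_congr rfl
    intro j hj
    have hne : i ≠ j := fun h => hi (h ▸ hj)
    rw [Finset.erase_insert_of_ne hne, Finset.prod_insert (fun h => hi (Finset.mem_of_mem_erase h))]
    ring


open MvPolynomial

noncomputable def ggP (n : ℕ) (D : Finset (Fin n → ℤ)) (h : Fin n → ℤ) :
    MvPolynomial (Fin n) ℚ :=
  ∏ lam ∈ D, ((∑ a, MvPolynomial.C (h a : ℚ) * MvPolynomial.X a) -
    MvPolynomial.C ((∑ a, h a * lam a : ℤ) : ℚ))

noncomputable def ellP (n : ℕ) (hs mu : Fin n → ℤ) : MvPolynomial (Fin n) ℚ :=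
  (∑ a, MvPolynomial.C (hs a : ℚ) * MvPolynomial.X a) -
    MvPolynomial.C ((∑ a, hs a * mu a : ℤ) : ℚ)

noncomputable def wwP (n : ℕ) (D : Finset (Fin n → ℤ)) (hs lam : Fin n → ℤ) :
    MvPolynomial (Fin n) ℚ :=
  ∏ mu ∈ D.erase lam, ellP n hs mu



open MvPolynomial

theorem gg_eq_prod_ell (n : ℕ) (D : Finset (Fin n → ℤ)) (hs : Fin n → ℤ) :
    ggP n D hs = ∏ mu ∈ D, ellP n hs mu := rfl

theorem pert_eq (n : ℕ) (D : Finset (Fin n → ℤ)) (hs : Fin n → ℤ) (a : Fin n) (t : ℕ) :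
    ggP n D (fun b => hs b + (if b = a then (t : ℤ) else 0)) =
      ∏ mu ∈ D, (ellP n hs mu +
        (MvPolynomial.X a - MvPolynomial.C ((mu a : ℤ) : ℚ)) * MvPolynomial.C ((t : ℕ) : ℚ)) := by
  unfold ggP ellP
  apply Finset.prod_congr rfl
  intro mu _
  have e1b : ∀ b : Fin n,
      MvPolynomial.C ((hs b + (if b = a then (t : ℤ) else 0) : ℤ) : ℚ) * MvPolynomial.X b
        = MvPolynomial.C ((hs b : ℤ) : ℚ) * MvPolynomial.X b +
          (if b = a then MvPolynomial.C ((t : ℕ) : ℚ) * MvPolynomial.X b else 0) := by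
    intro b
    split_ifs with hba
    · have hc : ((hs b + (t : ℤ) : ℤ) : ℚ) = ((hs b : ℤ) : ℚ) + ((t : ℕ) : ℚ) := by push_cast; ring
      rw [hc, map_add, add_mul]
    · simp
  have e1 : (∑ b, MvPolynomial.C ((hs b + (if b = a then (t : ℤ) else 0) : ℤ) : ℚ) *
      MvPolynomial.X b)
      = (∑ b, MvPolynomial.C ((hs b : ℤ) : ℚ) * MvPolynomial.X b) +
        MvPolynomial.C ((t : ℕ) : ℚ) * MvPolynomial.X a := by
    rw [Finset.sum_congr rfl (fun b _ => e1b b), Finset.sum_add_distrib]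
    congr 1
    simp
  have e2 : ((∑ b, (hs b + (if b = a then (t : ℤ) else 0)) * mu b : ℤ) : ℚ)
      = ((∑ b, hs b * mu b : ℤ) : ℚ) + ((t : ℕ) : ℚ) * ((mu a : ℤ) : ℚ) := by
    have hz : (∑ b, (hs b + (if b = a then (t : ℤ) else 0)) * mu b)
        = (∑ b, hs b * mu b) + (t : ℤ) * mu a := by
      rw [Finset.sum_congr rfl (fun b _ => add_mul (hs b) _ (mu b)), Finset.sum_add_distrib]
      congr 1
      rw [Finset.sum_congr rfl (fun b _ => ite_mul (b = a) (t : ℤ) 0 (mu b))]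
      simp
    rw [hz]; push_cast; ring
  rw [e1, e2, map_add, map_mul]
  ring

theorem sum_deriv_mem (n : ℕ) (D : Finset (Fin n → ℤ)) (hs : Fin n → ℤ) (a : Fin n) :
    (∑ mu ∈ D, wwP n D hs mu * (MvPolynomial.X a - MvPolynomial.C ((mu a : ℤ) : ℚ)))
      ∈ Ideal.span (Set.range (ggP n D)) := by
  classical
  set J := Ideal.span (Set.range (ggP n D)) with hJ
  set P : Polynomial (MvPolynomial (Fin n) ℚ) :=
    ∏ mu ∈ D, (Polynomial.C (ellP n hs mu) +
      Polynomial.C (MvPolynomial.X a - MvPolynomial.C ((mu a : ℤ) : ℚ)) * Polynomial.X) with hP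
  have hPval : ∀ t : ℕ, Polynomial.eval ((t : ℕ) : MvPolynomial (Fin n) ℚ) P ∈ J := by
    intro t
    have he : Polynomial.eval ((t : ℕ) : MvPolynomial (Fin n) ℚ) P
        = ggP n D (fun b => hs b + (if b = a then (t : ℤ) else 0)) := by
      rw [pert_eq, hP, Polynomial.eval_prod]
      apply Finset.prod_congr rfl
      intro mu _
      rw [Polynomial.eval_add, Polynomial.eval_C, Polynomial.eval_mul, Polynomial.eval_C,
        Polynomial.eval_X]
      congr 1
    rw [he]
    exact Ideal.subset_span ⟨_, rfl⟩
  have hd := derivMem J P hPval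
  have hcomp : Polynomial.eval 0 (Polynomial.derivative P)
      = ∑ mu ∈ D, wwP n D hs mu * (MvPolynomial.X a - MvPolynomial.C ((mu a : ℤ) : ℚ)) := by
    rw [hP, derivative_finset_prod, Polynomial.eval_finset_sum]
    apply Finset.sum_congr rfl
    intro mu hmu
    rw [Polynomial.eval_mul]
    congr 1
    · rw [Polynomial.eval_prod]
      unfold wwP
      apply Finset.prod_congr rfl
      intro nu _
      simp
    · simp
  rwa [hcomp] at hd


/-- Let `D ⊂ ℤ^n` be finite, viewed as a set of points of `ℚ^n`.  Then
the vanishing ideal of `D` in `ℚ[X₁,…,Xₙ]` equals the ideal generated by the polynomials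
`∏_{λ ∈ D} (∑ a, h a • X a − ⟨h,λ⟩)` as `h` ranges over `ℤ^n`. -/
theorem stmt8 (n : ℕ) (hn : 1 ≤ n) (D : Finset (Fin n → ℤ)) :
    MvPolynomial.vanishingIdeal ℚ
        ((fun lam : Fin n → ℤ => fun a : Fin n => (lam a : ℚ)) '' (↑D : Set (Fin n → ℤ))) =
      Ideal.span (Set.range fun h : Fin n → ℤ =>
        ∏ lam ∈ D,
          ((∑ a, MvPolynomial.C (h a : ℚ) * MvPolynomial.X a) -
            MvPolynomial.C ((∑ a, h a * lam a : ℤ) : ℚ))) := by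
  classical
  apply le_antisymm
  · -- hard direction
    intro f hf
    show f ∈ Ideal.span (Set.range (ggP n D))
    rcases D.eq_empty_or_nonempty with rfl | hD
    · have h1 : (1 : MvPolynomial (Fin n) ℚ) ∈ Ideal.span (Set.range (ggP n (∅ : Finset _))) := by
        apply Ideal.subset_span
        exact ⟨0, by simp [ggP]⟩
      rw [(Ideal.eq_top_iff_one _).mpr h1]
      trivial
    obtain ⟨hs, hinj⟩ := sepExists n D
    set J := Ideal.span (Set.range (ggP n D)) with hJ
    set v : (Fin n → ℤ) → ℚ := fun lam => ((∑ a, hs a * lam a : ℤ) : ℚ) with hv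
    have hgh : (∏ mu ∈ D, ellP n hs mu) ∈ J := Ideal.subset_span ⟨hs, rfl⟩
    have horth : ∀ lam ∈ D, ∀ lam' ∈ D, lam ≠ lam' →
        wwP n D hs lam * wwP n D hs lam' ∈ J := by
      intro lam hlam lam' hlam' hne
      have h1 : wwP n D hs lam
          = ellP n hs lam' * ∏ mu ∈ (D.erase lam).erase lam', ellP n hs mu := by
        unfold wwP
        rw [Finset.mul_prod_erase _ _ (Finset.mem_erase.mpr ⟨hne.symm, hlam'⟩)]
      have h2 : ellP n hs lam' * wwP n D hs lam' = ∏ mu ∈ D, ellP n hs mu :=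
        Finset.mul_prod_erase D _ hlam'
      have h3 : wwP n D hs lam * wwP n D hs lam'
          = (∏ mu ∈ (D.erase lam).erase lam', ellP n hs mu) *
            (ellP n hs lam' * wwP n D hs lam') := by
        rw [h1]; ring
      rw [h3, h2]
      exact Ideal.mul_mem_left _ _ hgh
    -- Lagrange identity
    have hlag : (∑ lam ∈ D, MvPolynomial.C (∏ mu ∈ D.erase lam, (v lam - v mu)⁻¹) *
        wwP n D hs lam) = (1 : MvPolynomial (Fin n) ℚ) := by
      have hsumb := Lagrange.sum_basis hinj hD
      have hmap := congrArg (fun p : Polynomial ℚ =>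
        Polynomial.aeval (∑ a, MvPolynomial.C (hs a : ℚ) * MvPolynomial.X a) p) hsumb
      simp only [map_sum, map_one] at hmap
      rw [← hmap]
      apply Finset.sum_congr rfl
      intro lam hlam
      calc MvPolynomial.C (∏ mu ∈ D.erase lam, (v lam - v mu)⁻¹) * wwP n D hs lam
          = ∏ mu ∈ D.erase lam, (MvPolynomial.C ((v lam - v mu)⁻¹) * ellP n hs mu) := by
            unfold wwP
            rw [map_prod, Finset.prod_mul_distrib]
        _ = Polynomial.aeval (∑ a, MvPolynomial.C (hs a : ℚ) * MvPolynomial.X a)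
              (Lagrange.basis D v lam) := by
            rw [Lagrange.basis, map_prod]
            apply Finset.prod_congr rfl
            intro mu _
            rw [Lagrange.basisDivisor, map_mul, Polynomial.aeval_C, map_sub, Polynomial.aeval_X,
              Polynomial.aeval_C, MvPolynomial.algebraMap_eq]
            rfl
    -- key membership
    have hkey : ∀ lam ∈ D, ∀ a : Fin n,
        (MvPolynomial.X a - MvPolynomial.C ((lam a : ℤ) : ℚ)) * wwP n D hs lam ∈ J := by
      intro lam hlam a
      have hder := sum_deriv_mem n D hs a
      have hsq : wwP n D hs lam * (wwP n D hs lam *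
          (MvPolynomial.X a - MvPolynomial.C ((lam a : ℤ) : ℚ))) ∈ J := by
        have h1 : wwP n D hs lam * (∑ mu ∈ D, wwP n D hs mu *
            (MvPolynomial.X a - MvPolynomial.C ((mu a : ℤ) : ℚ))) ∈ J :=
          Ideal.mul_mem_left _ _ hder
        rw [Finset.mul_sum] at h1
        have h3 : (∑ mu ∈ D, wwP n D hs lam * (wwP n D hs mu *
            (MvPolynomial.X a - MvPolynomial.C ((mu a : ℤ) : ℚ))))
            = (∑ mu ∈ D.erase lam, wwP n D hs lam * (wwP n D hs mu *
              (MvPolynomial.X a - MvPolynomial.C ((mu a : ℤ) : ℚ))))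
              + wwP n D hs lam * (wwP n D hs lam *
                (MvPolynomial.X a - MvPolynomial.C ((lam a : ℤ) : ℚ))) :=
          (Finset.sum_erase_add D _ hlam).symm
      
        have h4 : (∑ mu ∈ D.erase lam, wwP n D hs lam * (wwP n D hs mu *
            (MvPolynomial.X a - MvPolynomial.C ((mu a : ℤ) : ℚ)))) ∈ J := by
          apply Ideal.sum_mem
          intro mu hmu
          obtain ⟨hmune, hmuD⟩ := Finset.mem_erase.mp hmu
          have hor := horth lam hlam mu hmuD (fun h => hmune h.symm)
          have : wwP n D hs lam * (wwP n D hs mu *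
              (MvPolynomial.X a - MvPolynomial.C ((mu a : ℤ) : ℚ)))
              = (MvPolynomial.X a - MvPolynomial.C ((mu a : ℤ) : ℚ)) *
                (wwP n D hs lam * wwP n D hs mu) := by ring
          rw [this]
          exact Ideal.mul_mem_left _ _ hor
        rw [h3] at h1
        have := Ideal.sub_mem _ h1 h4
        simpa using this
      -- now use Lagrange
      have h5 : (MvPolynomial.X a - MvPolynomial.C ((lam a : ℤ) : ℚ)) * wwP n D hs lam
          = ∑ lam' ∈ D, MvPolynomial.C (∏ mu ∈ D.erase lam', (v lam' - v mu)⁻¹) *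
              wwP n D hs lam' *
              ((MvPolynomial.X a - MvPolynomial.C ((lam a : ℤ) : ℚ)) * wwP n D hs lam) := by
        rw [← Finset.sum_mul, hlag, one_mul]
      rw [h5]
      apply Ideal.sum_mem
      intro lam' hlam'
      by_cases hcase : lam' = lam
      · subst hcase
        have : MvPolynomial.C (∏ mu ∈ D.erase lam', (v lam' - v mu)⁻¹) * wwP n D hs lam' *
            ((MvPolynomial.X a - MvPolynomial.C ((lam' a : ℤ) : ℚ)) * wwP n D hs lam')
            = MvPolynomial.C (∏ mu ∈ D.erase lam', (v lam' - v mu)⁻¹) *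
              (wwP n D hs lam' * (wwP n D hs lam' *
                (MvPolynomial.X a - MvPolynomial.C ((lam' a : ℤ) : ℚ)))) := by ring
        rw [this]
        exact Ideal.mul_mem_left _ _ hsq
      · have hor := horth lam' hlam' lam hlam hcase
        have : MvPolynomial.C (∏ mu ∈ D.erase lam', (v lam' - v mu)⁻¹) * wwP n D hs lam' *
            ((MvPolynomial.X a - MvPolynomial.C ((lam a : ℤ) : ℚ)) * wwP n D hs lam)
            = (MvPolynomial.C (∏ mu ∈ D.erase lam', (v lam' - v mu)⁻¹) *
              (MvPolynomial.X a - MvPolynomial.C ((lam a : ℤ) : ℚ))) *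
              (wwP n D hs lam' * wwP n D hs lam) := by ring
        rw [this]
        exact Ideal.mul_mem_left _ _ hor
    -- f times w is in J
    have hfw : ∀ lam ∈ D, f * wwP n D hs lam ∈ J := by
      intro lam hlam
      have hveval : MvPolynomial.eval (fun b => ((lam b : ℤ) : ℚ)) f = 0 :=
        hf _ ⟨lam, hlam, rfl⟩
      have hspan := memSpanSub (fun b => ((lam b : ℤ) : ℚ)) f hveval
      refine Submodule.span_induction ?_ ?_ ?_ ?_ hspan
      · rintro x ⟨a, rfl⟩
        exact hkey lam hlam a
      · rw [zero_mul]; exact Ideal.zero_mem _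
      · intro x y hx hy hx' hy'
        rw [add_mul]; exact Ideal.add_mem _ hx' hy'
      · intro r x hx hx'
        rw [smul_mul_assoc]
        exact Submodule.smul_mem _ _ hx'
    -- conclude
    have hrep : f = ∑ lam ∈ D, MvPolynomial.C (∏ mu ∈ D.erase lam, (v lam - v mu)⁻¹) *
        wwP n D hs lam * f := by
      rw [← Finset.sum_mul, hlag, one_mul]
    rw [hrep]
    apply Ideal.sum_mem
    intro lam hlam
    have : MvPolynomial.C (∏ mu ∈ D.erase lam, (v lam - v mu)⁻¹) * wwP n D hs lam * f
        = MvPolynomial.C (∏ mu ∈ D.erase lam, (v lam - v mu)⁻¹) * (f * wwP n D hs lam) := by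
      ring
    rw [this]
    exact Ideal.mul_mem_left _ _ (hfw lam hlam)
  · -- easy direction
    rw [Ideal.span_le]
    rintro p ⟨h, rfl⟩
    rw [SetLike.mem_coe, MvPolynomial.mem_vanishingIdeal_iff]
    rintro x ⟨lam, hlam, rfl⟩
    rw [map_prod]
    apply Finset.prod_eq_zero hlam
    simp only [map_sub, map_sum, map_mul, MvPolynomial.eval_C, MvPolynomial.eval_X,
      MvPolynomial.aeval_C, MvPolynomial.aeval_X, Algebra.algebraMap_self, RingHom.id_apply]
    push_cast
    ring
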